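/- Let K ≥ 4 be an integer and let m be the least positive integer such that C(m, ⌊m/2⌋) ≥ K. Then m ≤ ⌈log₂ K + (1/2)·log₂ log₂ K + 2⌉. -/
import Mathlib

lemma aux_cb_sq : ∀ k : ℕ, 1 ≤ k → 16 ^ k ≤ 4 * k * (Nat.centralBinom k) ^ 2 := by
  intro k hk
  induction k with
  | zero => omega
  | succ n ih =>
    rcases Nat.eq_zero_or_pos n with h0 | h1
    · subst h0; decide
    · have ih' := ih h1
      have key : ((n + 1) * Nat.centralBinom (n + 1)) ^ 2
          = (2 * (2 * n + 1) * Nat.centralBinom n) ^ 2 := by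
        rw [Nat.succ_mul_centralBinom_succ]
      have hpos : 0 < n * (n + 1) ^ 2 := by positivity
      apply Nat.le_of_mul_le_mul_left _ hpos
      calc n * (n + 1) ^ 2 * 16 ^ (n + 1)
          = n * (n + 1) ^ 2 * 16 * 16 ^ n := by ring
        _ ≤ n * (n + 1) ^ 2 * 16 * (4 * n * (Nat.centralBinom n) ^ 2) :=
            Nat.mul_le_mul_left _ ih'
        _ = (4 * n * (n + 1)) * (16 * n * (n + 1) * (Nat.centralBinom n) ^ 2) := by ring
        _ ≤ ((2 * n + 1) ^ 2) * (16 * n * (n + 1) * (Nat.centralBinom n) ^ 2) := by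
            apply Nat.mul_le_mul_right
            nlinarith
        _ = 4 * n * (n + 1) * ((2 * (2 * n + 1) * Nat.centralBinom n) ^ 2) := by ring
        _ = 4 * n * (n + 1) * (((n + 1) * Nat.centralBinom (n + 1)) ^ 2) := by rw [key]
        _ = n * (n + 1) ^ 2 * (4 * (n + 1) * Nat.centralBinom (n + 1) ^ 2) := by ring

lemma aux_logb_le_half (L : ℝ) (hL : 4 ≤ L) : Real.logb 2 L ≤ L / 2 := by
  have hL0 : (0:ℝ) < L := by linarith
  rw [Real.logb_le_iff_le_rpow one_lt_two hL0]
  have h1 : (2:ℝ) ^ (L / 2) = 4 * (2:ℝ) ^ (L / 2 - 2) := by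
    rw [show (4:ℝ) = (2:ℝ) ^ (2:ℝ) by
          rw [show (2:ℝ) = ((2:ℕ):ℝ) by norm_num, Real.rpow_natCast]; norm_num,
        ← Real.rpow_add two_pos]
    ring_nf
  have h2 : (2:ℝ) ^ (L / 2 - 2) = Real.exp ((L / 2 - 2) * Real.log 2) := by
    rw [Real.rpow_def_of_pos two_pos, mul_comm]
  have h3 := Real.add_one_le_exp ((L / 2 - 2) * Real.log 2)
  have hlog2 : (0.6931471803 : ℝ) < Real.log 2 := Real.log_two_gt_d9
  rw [h1, h2]
  nlinarith

lemma aux_logb_two_four : Real.logb 2 4 = 2 := by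
  rw [show (4:ℝ) = 2 ^ (2:ℝ) by
        rw [show (2:ℝ)^(2:ℝ) = 2^(2:ℕ) by rw [← Real.rpow_natCast]; norm_num]; norm_num,
      Real.logb_rpow two_pos (by norm_num)]

theorem stmt_1 (K m : ℕ) (hK : 4 ≤ K) (hm : 0 < m)
    (hge : K ≤ m.choose (m / 2))
    (hleast : ∀ m' : ℕ, 0 < m' → K ≤ m'.choose (m' / 2) → m ≤ m') :
    (m : ℤ) ≤ ⌈Real.logb 2 K + (1 / 2) * Real.logb 2 (Real.logb 2 K) + 2⌉ := by
  have hK0 : (0:ℝ) < (K:ℝ) := by positivity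
  set L : ℝ := Real.logb 2 (K:ℝ) with hLdef
  set x : ℝ := L + (1 / 2) * Real.logb 2 L + 2 with hxdef
  -- basic bound: L ≥ 2
  have hL2 : (2:ℝ) ≤ L := by
    have : Real.logb 2 4 ≤ Real.logb 2 (K:ℝ) :=
      Real.logb_le_logb_of_le one_lt_two (by norm_num) (by exact_mod_cast hK)
    rw [aux_logb_two_four] at this
    exact this
  have hlogL1 : (1:ℝ) ≤ Real.logb 2 L := by
    have := Real.logb_le_logb_of_le one_lt_two (by norm_num : (0:ℝ) < 2) hL2
    rwa [Real.logb_self_eq_one one_lt_two] at this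
  rcases le_or_gt K 10 with h10 | h10
  · -- K ≤ 10 : m ≤ 5 and ceiling ≥ 5
    have hm5 : m ≤ 5 := hleast 5 (by norm_num) (by norm_num [Nat.choose]; omega)
    have hx4 : (4:ℝ) < x := by
      have : (0:ℝ) ≤ Real.logb 2 L := by linarith
      simp only [hxdef]; linarith
    have h5 : (4:ℤ) < ⌈x⌉ := by rw [Int.lt_ceil]; exact_mod_cast hx4
    omega
  rcases le_or_gt K 15 with h15 | h15
  · -- 11 ≤ K ≤ 15 : m ≤ 6 and ceiling ≥ 6
    have hm6 : m ≤ 6 := hleast 6 (by norm_num) (by norm_num [Nat.choose]; omega)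
    have hL3 : (3:ℝ) < L := by
      have : Real.logb 2 8 < Real.logb 2 (K:ℝ) :=
        Real.logb_lt_logb one_lt_two (by norm_num) (by exact_mod_cast (by omega : 8 < K))
      rw [show (8:ℝ) = 2 ^ (3:ℝ) by
            rw [show (2:ℝ)^(3:ℝ) = 2^(3:ℕ) by rw [← Real.rpow_natCast]; norm_num]; norm_num,
          Real.logb_rpow two_pos (by norm_num)] at this
      exact this
    have hx5 : (5:ℝ) < x := by simp only [hxdef]; linarith
    have h6 : (5:ℤ) < ⌈x⌉ := by rw [Int.lt_ceil]; exact_mod_cast hx5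
    omega
  · -- main case: K ≥ 16, so L ≥ 4
    have hL4 : (4:ℝ) ≤ L := by
      have : Real.logb 2 16 ≤ Real.logb 2 (K:ℝ) :=
        Real.logb_le_logb_of_le one_lt_two (by norm_num) (by exact_mod_cast h15)
      rw [show (16:ℝ) = 2 ^ (4:ℝ) by
            rw [show (2:ℝ)^(4:ℝ) = 2^(4:ℕ) by rw [← Real.rpow_natCast]; norm_num]; norm_num,
          Real.logb_rpow two_pos (by norm_num)] at this
      exact this
    have hL0 : (0:ℝ) < L := by linarith
    set N : ℤ := ⌈x⌉ with hNdef
    have hxN : x ≤ (N:ℝ) := Int.le_ceil x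
    have hNx1 : (N:ℝ) < x + 1 := Int.ceil_lt_add_one x
    have hx7 : (7:ℝ) ≤ x := by
      have hlogL2 : (2:ℝ) ≤ Real.logb 2 L := by
        have := Real.logb_le_logb_of_le one_lt_two (by norm_num : (0:ℝ) < 4) hL4
        rwa [aux_logb_two_four] at this
      simp only [hxdef]; linarith
    have hN0 : 0 ≤ N := by
      have : (0:ℝ) ≤ (N:ℝ) := by linarith
      exact_mod_cast this
    set n : ℕ := N.toNat with hndef
    have hnN : (n:ℤ) = N := Int.toNat_of_nonneg hN0
    have hnR : (n:ℝ) = (N:ℝ) := by exact_mod_cast hnN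
    have hxn : x ≤ (n:ℝ) := by rw [hnR]; exact hxN
    have hnx1 : (n:ℝ) ≤ x + 1 := by rw [hnR]; linarith
    have hn7 : 7 ≤ n := by
      have : (7:ℝ) ≤ (n:ℝ) := le_trans hx7 hxn
      exact_mod_cast this
    set k : ℕ := n / 2 with hkdef
    have hk3 : 3 ≤ k := by omega
    have hk2n : 2 * k ≤ n := by omega
    have hn2k : n ≤ 2 * k + 1 := by omega
    have hk2nR : 2 * (k:ℝ) ≤ (n:ℝ) := by exact_mod_cast hk2n
    have hn2kR : (n:ℝ) ≤ 2 * (k:ℝ) + 1 := by exact_mod_cast hn2k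
    have hlogLhalf : Real.logb 2 L ≤ L / 2 := aux_logb_le_half L hL4
    -- k ≤ L
    have hkL : (k:ℝ) ≤ L := by
      simp only [hxdef] at hnx1
      linarith
    -- key real inequality : 4 k K² ≤ 16^k
    have hKe : (2:ℝ) ^ L = (K:ℝ) := Real.rpow_logb two_pos (by norm_num) hK0
    have hLe : (2:ℝ) ^ (Real.logb 2 L) = L := Real.rpow_logb two_pos (by norm_num) hL0
    have hmain : 4 * (k:ℝ) * (K:ℝ) ^ 2 ≤ (16:ℝ) ^ k := by
      have e1 : (16:ℝ) ^ k = (2:ℝ) ^ ((4 * k : ℕ) : ℝ) := by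
        rw [Real.rpow_natCast, show (16:ℝ) = 2 ^ (4:ℕ) by norm_num, ← pow_mul]
      have e2 : (K:ℝ) ^ 2 = (2:ℝ) ^ (L * 2) := by
        rw [← hKe, ← Real.rpow_natCast ((2:ℝ)^L) 2, ← Real.rpow_mul (by norm_num)]
        norm_num
      have e3 : 4 * L * (2:ℝ) ^ (L * 2) = (2:ℝ) ^ (2 + Real.logb 2 L + L * 2) := by
        rw [Real.rpow_add two_pos, Real.rpow_add two_pos, hLe]
        rw [show (2:ℝ)^(2:ℝ) = 2^(2:ℕ) by rw [← Real.rpow_natCast]; norm_num]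
        ring
      have hexp : 2 + Real.logb 2 L + L * 2 ≤ ((4 * k : ℕ) : ℝ) := by
        have : ((4 * k : ℕ) : ℝ) = 4 * (k:ℝ) := by push_cast; ring
        rw [this]
        have h4k : 2 * ((n:ℝ) - 1) ≤ 4 * (k:ℝ) := by linarith
        simp only [hxdef] at hxn
        linarith
      have hmono : (2:ℝ) ^ (2 + Real.logb 2 L + L * 2) ≤ (2:ℝ) ^ ((4 * k : ℕ) : ℝ) :=
        Real.rpow_le_rpow_of_exponent_le (by norm_num) hexp
      have hpow_pos : (0:ℝ) < (2:ℝ) ^ (L * 2) := Real.rpow_pos_of_pos two_pos _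
      calc 4 * (k:ℝ) * (K:ℝ) ^ 2 = 4 * (k:ℝ) * (2:ℝ) ^ (L * 2) := by rw [e2]
        _ ≤ 4 * L * (2:ℝ) ^ (L * 2) := by nlinarith
        _ = (2:ℝ) ^ (2 + Real.logb 2 L + L * 2) := e3
        _ ≤ (2:ℝ) ^ ((4 * k : ℕ) : ℝ) := hmono
        _ = (16:ℝ) ^ k := e1.symm
    -- conclude K ≤ centralBinom k
    have hcb : 16 ^ k ≤ 4 * k * (Nat.centralBinom k) ^ 2 := aux_cb_sq k (by omega)
    have hcbR : (16:ℝ) ^ k ≤ 4 * (k:ℝ) * ((Nat.centralBinom k : ℕ) : ℝ) ^ 2 := by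
      exact_mod_cast hcb
    have hsq : (K:ℝ) ^ 2 ≤ ((Nat.centralBinom k : ℕ) : ℝ) ^ 2 := by
      have hkpos : (0:ℝ) < 4 * (k:ℝ) := by positivity
      nlinarith
    have hsqN : K ^ 2 ≤ (Nat.centralBinom k) ^ 2 := by exact_mod_cast hsq
    have hKA : K ≤ Nat.centralBinom k := by
      exact (Nat.pow_le_pow_iff_left (by norm_num : (2:ℕ) ≠ 0)).mp hsqN
    have hchoose : Nat.centralBinom k ≤ n.choose k := by
      rw [Nat.centralBinom]
      exact Nat.choose_le_choose k hk2n
    have hKn : K ≤ n.choose (n / 2) := le_trans hKA (by rw [← hkdef]; exact hchoose)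
    have hmn : m ≤ n := hleast n (by omega) hKn
    have : (m:ℤ) ≤ (n:ℤ) := by exact_mod_cast hmn
    rw [hnN] at this
    exact this
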